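/- If the edge set of the complete graph K_n (n ≥ 2) is partitioned into the edge sets of m pairwise edge-disjoint complete bipartite subgraphs, then m ≥ n - 1. -/

import Mathlib

/-- Graham–Pollak: if the edges of `K_n` (`n ≥ 2`) are partitioned into the edge
sets of `m` complete bipartite subgraphs `(L i, R i)`, then `m ≥ n - 1`. -/
theorem graham_pollak (n m : ℕ) (hn : 2 ≤ n)
    (L R : Fin m → Finset (Fin n))
    (hdisj : ∀ i, Disjoint (L i) (R i))
    (hL : ∀ i, (L i).Nonempty) (hR : ∀ i, (R i).Nonempty)
    (hpart : ∀ u v : Fin n, u ≠ v →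
      ∃! i : Fin m, (u ∈ L i ∧ v ∈ R i) ∨ (v ∈ L i ∧ u ∈ R i)) :
    n - 1 ≤ m := by
  by_contra hcon
  push_neg at hcon
  have hmn : m + 1 < n := by omega
  set f : (Fin n → ℝ) →ₗ[ℝ] (Fin m → ℝ) × ℝ :=
    { toFun := fun x => (fun i => ∑ u ∈ L i, x u, ∑ u, x u)
      map_add' := by
        intro x y
        refine Prod.ext ?_ ?_
        · funext i; simp [Finset.sum_add_distrib]
        · simp [Finset.sum_add_distrib]
      map_smul' := by
        intro c x
        refine Prod.ext ?_ ?_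
        · funext i; simp [Finset.mul_sum]
        · simp [Finset.mul_sum] } with hf
  have hninj : ¬ Function.Injective f := by
    intro hinj
    have h := LinearMap.finrank_le_finrank_of_injective hinj
    simp [Module.finrank_prod] at h
    omega
  have hker : LinearMap.ker f ≠ ⊥ := by
    rwa [Ne, LinearMap.ker_eq_bot]
  obtain ⟨z, hz, hzne⟩ := Submodule.exists_mem_ne_zero_of_ne_bot hker
  have hz0 : f z = 0 := hz
  have hLz : ∀ i, ∑ u ∈ L i, z u = 0 := by
    intro i
    have := congrArg Prod.fst hz0
    exact congrFun this i
  have hsum : ∑ u, z u = 0 := congrArg Prod.snd hz0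
  set E : Fin m → Finset (Fin n × Fin n) :=
    fun i => (L i ×ˢ R i) ∪ (R i ×ˢ L i) with hE
  have hmemE : ∀ i (p : Fin n × Fin n), p ∈ E i ↔
      ((p.1 ∈ L i ∧ p.2 ∈ R i) ∨ (p.2 ∈ L i ∧ p.1 ∈ R i)) := by
    intro i p
    simp [hE, Finset.mem_union, Finset.mem_product, and_comm]
  have hne : ∀ i (p : Fin n × Fin n), p ∈ E i → p.1 ≠ p.2 := by
    intro i p hp h
    rw [hmemE] at hp
    rcases hp with ⟨h1, h2⟩ | ⟨h1, h2⟩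
    · exact Finset.disjoint_left.1 (hdisj i) h1 (h ▸ h2)
    · exact Finset.disjoint_left.1 (hdisj i) (h ▸ h1) h2
  have hcover : (Finset.univ : Finset (Fin n)).offDiag = Finset.univ.biUnion E := by
    ext ⟨u, v⟩
    rw [Finset.mem_offDiag, Finset.mem_biUnion]
    constructor
    · rintro ⟨-, -, huv⟩
      obtain ⟨i, hi, -⟩ := hpart u v huv
      exact ⟨i, Finset.mem_univ i, (hmemE i (u, v)).2 hi⟩
    · rintro ⟨i, -, hp⟩
      exact ⟨Finset.mem_univ u, Finset.mem_univ v, hne i (u, v) hp⟩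
  have hpd : ((Finset.univ : Finset (Fin m)) : Set (Fin m)).PairwiseDisjoint E := by
    intro i _ j _ hij
    rw [Function.onFun, Finset.disjoint_left]
    intro p hpi hpj
    have hne' := hne i p hpi
    obtain ⟨k, -, huniq⟩ := hpart p.1 p.2 hne'
    have hi := huniq i ((hmemE i p).1 hpi)
    have hj := huniq j ((hmemE j p).1 hpj)
    exact hij (hi.trans hj.symm)
  have hsumE : ∀ i, ∑ p ∈ E i, z p.1 * z p.2 = 0 := by
    intro i
    have hd : Disjoint (L i ×ˢ R i) (R i ×ˢ L i) := by
      rw [Finset.disjoint_left]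
      rintro ⟨u, v⟩ h1 h2
      rw [Finset.mem_product] at h1 h2
      exact Finset.disjoint_left.1 (hdisj i) h1.1 h2.1
    have h1 : ∑ p ∈ L i ×ˢ R i, z p.1 * z p.2 = (∑ u ∈ L i, z u) * ∑ v ∈ R i, z v := by
      rw [Finset.sum_product, ← Finset.sum_mul_sum]
    have h2 : ∑ p ∈ R i ×ˢ L i, z p.1 * z p.2 = (∑ u ∈ R i, z u) * ∑ v ∈ L i, z v := by
      rw [Finset.sum_product, ← Finset.sum_mul_sum]
    rw [hE, Finset.sum_union hd, h1, h2, hLz i]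
    ring
  have hoff : ∑ p ∈ (Finset.univ : Finset (Fin n)).offDiag, z p.1 * z p.2 = 0 := by
    rw [hcover, Finset.sum_biUnion hpd]
    exact Finset.sum_eq_zero fun i _ => hsumE i
  have hdiag : ∑ u, z u * z u = 0 := by
    have hsq : (∑ u, z u) * (∑ v, z v) =
        ∑ p ∈ (Finset.univ : Finset (Fin n)) ×ˢ Finset.univ, z p.1 * z p.2 := by
      rw [Finset.sum_mul_sum, Finset.sum_product]
    rw [hsum, zero_mul] at hsq
    have hsplit : ∑ p ∈ (Finset.univ : Finset (Fin n)) ×ˢ Finset.univ, z p.1 * z p.2 =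
        (∑ p ∈ (Finset.univ : Finset (Fin n)).diag, z p.1 * z p.2) +
        ∑ p ∈ (Finset.univ : Finset (Fin n)).offDiag, z p.1 * z p.2 := by
      rw [← Finset.sum_union (Finset.disjoint_diag_offDiag _), Finset.diag_union_offDiag]
    rw [hsplit, hoff, add_zero, Finset.sum_diag] at hsq
    linarith [hsq]
  have hzzero : z = 0 := by
    funext u
    have h := (Finset.sum_eq_zero_iff_of_nonneg
      (fun u _ => mul_self_nonneg (z u))).1 hdiag u (Finset.mem_univ u)
    exact mul_self_eq_zero.1 h
  exact hzne hzzero
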